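/- arXiv:2311.12997 — 2 statements merged into one kernel-verified Lean document; each statement's English description precedes it below -/
import Mathlib

section
/- With the position encodings satisfying P^T P = [[I₃,I₃],[I₃,I₃]] (3×3 identity blocks) and the key matrix K projecting onto the task-token coordinates, the linear attention output (KZ)(M ⊙ Z^T Q Z) added to Z places, at each data position j ∈ {4,5,6}, the sum of the original token at position j and the task token from position j−3; the task-token positions are doubled. -/
open Matrix
/-- With position encodings satisfying `PᵀP = [[I₃,I₃],[I₃,I₃]]` (encoded via
`pᵢ·pⱼ = 1` iff `i ≡ j (mod 3)`), the key matrix `K` projecting onto the task-token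
coordinates (coordinates `≥ d_v`), and the query matrix `Q` projecting onto the position
coordinates, the causally masked linear attention output `(KZ)(M ⊙ ZᵀQZ)` added to `Z`
places at each position `i` (on token coordinates) the sum of the original token at `i` and the
task token from position `i mod 3`: task positions are doubled, and each data position `j ∈
{4,5,6}` receives its original token plus the task token from position `j − 3`. -/
theorem stmt14 (dx dp dv : ℕ)
    (tok : Fin 6 → Fin dx → ℝ) (p : Fin 6 → Fin dp → ℝ)
    (htask : ∀ i : Fin 6, i.val < 3 → ∀ r : Fin dx, r.val < dv → tok i r = 0)
    (hdata : ∀ i : Fin 6, 3 ≤ i.val → ∀ r : Fin dx, dv ≤ r.val → tok i r = 0)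
    (hp : ∀ i j : Fin 6, ∑ r, p i r * p j r = if i.val % 3 = j.val % 3 then (1 : ℝ) else 0) :
    let Z : Matrix (Fin dx ⊕ Fin dp) (Fin 6) ℝ :=
      Matrix.of fun r c => Sum.elim (fun rx => tok c rx) (fun rp => p c rp) r
    let Q : Matrix (Fin dx ⊕ Fin dp) (Fin dx ⊕ Fin dp) ℝ :=
      Matrix.of fun r r' =>
        match r, r' with
        | Sum.inr a, Sum.inr b => if a = b then (1 : ℝ) else 0
        | _, _ => 0
    let K : Matrix (Fin dx ⊕ Fin dp) (Fin dx ⊕ Fin dp) ℝ :=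
      Matrix.of fun r r' =>
        match r, r' with
        | Sum.inl a, Sum.inl b => if a = b ∧ dv ≤ a.val then (1 : ℝ) else 0
        | _, _ => 0
    let M : Matrix (Fin 6) (Fin 6) ℝ := Matrix.of fun i j => if i ≤ j then (1 : ℝ) else 0
    let A := K * Z * Matrix.hadamard M (Zᵀ * Q * Z)
    ∀ (i : Fin 6) (r : Fin dx),
      (A + Z) (Sum.inl r) i
        = Z (Sum.inl r) i + tok ⟨i.val % 3, by omega⟩ r := by
  intro Z Q K M A i r
  have hKZ : ∀ j : Fin 6, (K * Z) (Sum.inl r) j = if dv ≤ r.val then tok j r else 0 := by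
    intro j
    simp only [Matrix.mul_apply, Fintype.sum_sum_type, K, Z, Matrix.of_apply, Sum.elim_inl,
      Sum.elim_inr]
    rw [Finset.sum_eq_single r]
    · simp [eq_comm]
    · intro b _ hb; simp [hb.symm]
    · simp
  have hZQZ : ∀ k : Fin 6, (Zᵀ * Q * Z) k i = if k.val % 3 = i.val % 3 then 1 else 0 := by
    intro k
    simp only [Matrix.mul_apply, Fintype.sum_sum_type, Q, Z, Matrix.transpose_apply,
      Matrix.of_apply, Sum.elim_inl, Sum.elim_inr, mul_zero, zero_mul, Finset.sum_const_zero,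
      add_zero, zero_add, mul_ite, mul_one]
    rw [← hp k i]
    congr 1; ext a
    simp [Finset.sum_ite_eq']
  have hA : A (Sum.inl r) i = ∑ j : Fin 6, (if dv ≤ r.val then tok j r else 0) *
      ((if j ≤ i then (1:ℝ) else 0) * (if j.val % 3 = i.val % 3 then (1:ℝ) else 0)) := by
    show ∑ j, (K * Z) (Sum.inl r) j * (Matrix.hadamard M (Zᵀ * Q * Z)) j i = _
    refine Finset.sum_congr rfl fun j _ => ?_
    rw [Matrix.hadamard_apply, hKZ j, hZQZ j]
    simp [M]
  simp only [Matrix.add_apply]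
  rw [hA]
  by_cases h : dv ≤ r.val
  · have h3 : ∀ j : Fin 6, 3 ≤ j.val → tok j r = 0 := fun j hj => hdata j hj r h
    simp only [h, if_true, Fin.sum_univ_six]
    fin_cases i <;>
      norm_num [h3, show ((3:Fin 6)).val = 3 from rfl, show ((4:Fin 6)).val = 4 from rfl, show ((5:Fin 6)).val = 5 from rfl,
        Fin.le_def] <;> exact add_comm _ _
  · have h0 : tok ⟨i.val % 3, by omega⟩ r = 0 :=
      htask _ (show i.val % 3 < 3 by omega) r (by omega)
    simp [h, h0]
end

section
/- There exists a one-layer Transformer (linear attention with causal mask, followed by a two-layer ReLU MLP, with residual connections) whose weights realize exact compositional generalization on the step-by-step task: for every choice of functions F₁, F₂, F₃ : X_d → X_d from a fixed finite family F and every data token x_d, the model autoregressively maps the prompt [x_{F₁}, x_{F₂}, x_{F₃}, x_d] to the outputs [F₁(x_d), F₂(F₁(x_d)), F₃(F₂(F₁(x_d)))]. -/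
open Matrix


section
variable {V F : Type} [Fintype V] [Fintype F] [DecidableEq V] [DecidableEq F]

def myP : Fin 6 → Fin 6 → ℝ := fun c i => if i = c then 1 else 0

variable (V F) in
def myQ : Matrix ((V ⊕ F) ⊕ Fin 6) ((V ⊕ F) ⊕ Fin 6) ℝ :=
  Matrix.of fun r s => match r, s with
    | Sum.inr j, Sum.inr c => if (j : ℕ) + 3 = (c : ℕ) then 1 else 0
    | _, _ => 0

variable (V F) in
def myK : Matrix ((V ⊕ F) ⊕ Fin 6) ((V ⊕ F) ⊕ Fin 6) ℝ :=
  Matrix.of fun r s => match r, s with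
    | Sum.inl x, Sum.inl x' => if x = x' then 1 else 0
    | _, _ => 0

variable (V F) in
def myW1 : Matrix (F × V) ((V ⊕ F) ⊕ Fin 6) ℝ :=
  Matrix.of fun fu r => match r with
    | Sum.inl (Sum.inl u') => if u' = fu.2 then 1 else 0
    | Sum.inl (Sum.inr f') => if f' = fu.1 then 1 else 0
    | Sum.inr _ => -1

def myW2 (app : F → V → V) : Matrix ((V ⊕ F) ⊕ Fin 6) (F × V) ℝ :=
  Matrix.of fun r fu => if r = Sum.inl (Sum.inl (app fu.1 fu.2)) then 3 else 0

variable (V F) in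
def myWe : Matrix (V ⊕ F) ((V ⊕ F) ⊕ Fin 6) ℝ :=
  Matrix.of fun y r => if r = Sum.inl y then 1 else 0

def Zmat (toks : Fin 6 → V ⊕ F) : Matrix ((V ⊕ F) ⊕ Fin 6) (Fin 6) ℝ :=
  Matrix.of fun r c =>
    Sum.elim (fun rx => if rx = toks c then (1 : ℝ) else 0) (fun rp => myP c rp) r

def Mmat : Matrix (Fin 6) (Fin 6) ℝ := Matrix.of fun i j => if i ≤ j then (1 : ℝ) else 0

lemma ZQZ (toks : Fin 6 → V ⊕ F) (j c : Fin 6) :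
    ((Zmat toks)ᵀ * myQ V F * Zmat toks) j c = if (j : ℕ) + 3 = (c : ℕ) then 1 else 0 := by
  simp only [Matrix.mul_apply, Matrix.transpose_apply, Zmat, myQ, myP, Matrix.of_apply,
    Fintype.sum_sum_type, Sum.elim_inl, Sum.elim_inr]
  simp [Finset.mul_sum, Finset.sum_mul, ite_and, Finset.sum_ite_eq, Finset.sum_ite_eq',
    mul_ite, ite_mul]
  rw [Finset.sum_eq_single j]
  · simp
  · intro b _ hb; simp [hb]
  · simp

end

section
variable {V F : Type} [Fintype V] [Fintype F] [DecidableEq V] [DecidableEq F]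

lemma Aapp (toks : Fin 6 → V ⊕ F) (r : (V ⊕ F) ⊕ Fin 6) (c : Fin 6) :
    (myK V F * Zmat toks * Matrix.hadamard Mmat ((Zmat toks)ᵀ * myQ V F * Zmat toks)) r c
      = Sum.elim (fun x => ∑ j : Fin 6, if (j : ℕ) + 3 = (c : ℕ) ∧ x = toks j then 1 else 0)
          (fun _ => 0) r := by
  have hKZ : ∀ (r : (V ⊕ F) ⊕ Fin 6) (j : Fin 6), (myK V F * Zmat toks) r j
      = Sum.elim (fun x => if x = toks j then (1:ℝ) else 0) (fun _ => 0) r := by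
    intro r j
    simp only [Matrix.mul_apply, myK, Zmat, myP, Matrix.of_apply, Fintype.sum_sum_type]
    rcases r with x | i
    · rcases htj : toks j with u | g <;> rcases x with u' | g' <;>
        simp [htj, ite_mul, Finset.sum_ite_eq, Finset.sum_ite_eq', eq_comm]
    · simp
  rw [Matrix.mul_apply]
  simp only [hKZ, Matrix.hadamard_apply, ZQZ, Mmat, Matrix.of_apply]
  rcases r with x | i
  · simp only [Sum.elim_inl]
    refine Finset.sum_congr rfl fun j _ => ?_
    by_cases h1 : (j : ℕ) + 3 = (c : ℕ)
    · have hle : j ≤ c := by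
        rw [Fin.le_def]; omega
      simp [h1, hle, ite_and]
    · simp [h1, ite_and]
  · simp

lemma logitsEq (app : F → V → V) (toks : Fin 6 → V ⊕ F) (y : V ⊕ F) (c j : Fin 6)
    (hj : (j : ℕ) + 3 = (c : ℕ)) (u : V) (g : F)
    (hu : toks c = Sum.inl u) (hg : toks j = Sum.inr g) :
    (myWe V F *
      (myW2 app * (Matrix.of fun q c => max 0 ((myW1 V F *
          (myK V F * Zmat toks * Matrix.hadamard Mmat ((Zmat toks)ᵀ * myQ V F * Zmat toks)
            + Zmat toks)) q c))
        + (myK V F * Zmat toks * Matrix.hadamard Mmat ((Zmat toks)ᵀ * myQ V F * Zmat toks)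
            + Zmat toks))) y c
    = (if y = Sum.inl (app g u) then 3 else 0) + ((if y = toks j then 1 else 0)
        + (if y = toks c then 1 else 0)) := by
  set A := myK V F * Zmat toks * Matrix.hadamard Mmat ((Zmat toks)ᵀ * myQ V F * Zmat toks)
    with hA
  have hHinl : ∀ (x : V ⊕ F), (A + Zmat toks) (Sum.inl x) c
      = (if x = toks j then 1 else 0) + (if x = toks c then 1 else 0) := by
    intro x
    have : A (Sum.inl x) c = if x = toks j then 1 else 0 := by
      rw [hA, Aapp]
      simp only [Sum.elim_inl]
      rw [Finset.sum_eq_single j]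
      · simp [hj]
      · intro b _ hb
        have : ¬ ((b : ℕ) + 3 = (c : ℕ)) := by
          intro h; exact hb (Fin.ext (by omega))
        simp [this]
      · simp
    simp [Matrix.add_apply, this, Zmat]
  have hHinr : ∀ (i : Fin 6), (A + Zmat toks) (Sum.inr i) c = if i = c then 1 else 0 := by
    intro i
    rw [Matrix.add_apply, hA, Aapp]
    simp [Zmat, myP]
  have hW1H : ∀ fu : F × V, (myW1 V F * (A + Zmat toks)) fu c
      = (if u = fu.2 then 1 else 0) + (if g = fu.1 then 1 else 0) + (-1) := by
    intro fu
    rw [Matrix.mul_apply]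
    simp only [Fintype.sum_sum_type, myW1, Matrix.of_apply]
    have e1 : ∀ u' : V, (A + Zmat toks) (Sum.inl (Sum.inl u')) c = if u' = u then 1 else 0 := by
      intro u'; rw [hHinl]; simp [hg, hu]
    have e2 : ∀ f' : F, (A + Zmat toks) (Sum.inl (Sum.inr f')) c = if f' = g then 1 else 0 := by
      intro f'; rw [hHinl]; simp [hg, hu]
    simp only [e1, e2, hHinr]
    simp [ite_mul, mul_ite, Finset.sum_ite_eq, Finset.sum_ite_eq', eq_comm]
  have hrelu : ∀ fu : F × V, max 0 ((myW1 V F * (A + Zmat toks)) fu c)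
      = if fu = (g, u) then 1 else 0 := by
    intro fu
    rw [hW1H]
    rcases fu with ⟨f', u'⟩
    have hR : ((f', u') = (g, u)) ↔ (g = f' ∧ u = u') := by
      rw [Prod.ext_iff]
      constructor <;> (rintro ⟨a, b⟩; exact ⟨a.symm, b.symm⟩)
    simp only [hR]
    by_cases h1 : u = u' <;> by_cases h2 : g = f' <;> simp [h1, h2] <;> norm_num
  have hW2 : ∀ x : V ⊕ F,
      (myW2 app * (Matrix.of fun q c => max 0 ((myW1 V F * (A + Zmat toks)) q c))) (Sum.inl x) c
      = if x = Sum.inl (app g u) then 3 else 0 := by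
    intro x
    rw [Matrix.mul_apply]
    simp only [Matrix.of_apply, hrelu, myW2]
    rw [Finset.sum_eq_single ((g, u) : F × V)]
    · by_cases h : x = Sum.inl (app g u) <;> simp [h]
    · intro b _ hb; simp [hb]
    · simp
  rw [Matrix.mul_apply, Finset.sum_eq_single (Sum.inl y : (V ⊕ F) ⊕ Fin 6)]
  · have h1 : myWe V F y (Sum.inl y) = 1 := by simp [myWe]
    rw [h1, one_mul, Matrix.add_apply, hW2 y, hHinl y]
  · intro b _ hb
    have : myWe V F y b = 0 := by simp [myWe, hb]
    rw [this, zero_mul]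
  · simp

end


/-- Existence of a one-layer Transformer (causally masked linear attention plus a two-layer
ReLU MLP with residual connections, followed by an unembedding) that exactly solves the
step-by-step composition task: for every choice of functions `f₁ f₂ f₃` from a fixed finite
family (acting on data tokens via `app`) and every data token `v`, feeding the sequence
`[x_{f₁}, x_{f₂}, x_{f₃}, x_v, x_{f₁ v}, x_{f₂ (f₁ v)}]` (one-hot tokens with concatenated
position encodings), the logits at positions 4, 5, 6 are uniquely maximized at
`f₁(v)`, `f₂(f₁(v))`, `f₃(f₂(f₁(v)))` respectively — i.e. the model autoregressively generates
the step-by-step outputs for all compositions. -/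
theorem stmt15 (V F : Type) [Fintype V] [Fintype F] [DecidableEq V] [DecidableEq F]
    (app : F → V → V) :
    ∃ (dp : ℕ) (p : Fin 6 → Fin dp → ℝ)
      (Q K : Matrix ((V ⊕ F) ⊕ Fin dp) ((V ⊕ F) ⊕ Fin dp) ℝ)
      (W1 : Matrix (F × V) ((V ⊕ F) ⊕ Fin dp) ℝ)
      (W2 : Matrix ((V ⊕ F) ⊕ Fin dp) (F × V) ℝ)
      (We : Matrix (V ⊕ F) ((V ⊕ F) ⊕ Fin dp) ℝ),
      ∀ (f1 f2 f3 : F) (v : V),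
        let toks : Fin 6 → V ⊕ F :=
          ![Sum.inr f1, Sum.inr f2, Sum.inr f3, Sum.inl v,
            Sum.inl (app f1 v), Sum.inl (app f2 (app f1 v))]
        let Z : Matrix ((V ⊕ F) ⊕ Fin dp) (Fin 6) ℝ :=
          Matrix.of fun r c =>
            Sum.elim (fun rx => if rx = toks c then (1 : ℝ) else 0) (fun rp => p c rp) r
        let M : Matrix (Fin 6) (Fin 6) ℝ := Matrix.of fun i j => if i ≤ j then (1 : ℝ) else 0
        let A := K * Z * Matrix.hadamard M (Zᵀ * Q * Z)
        let H := A + Z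
        let Tr := W2 * (Matrix.of fun q c => max 0 ((W1 * H) q c)) + H
        let logits := We * Tr
        let target : Fin 3 → V := ![app f1 v, app f2 (app f1 v), app f3 (app f2 (app f1 v))]
        ∀ (t : Fin 3) (y : V ⊕ F), y ≠ Sum.inl (target t) →
          logits y (Fin.cast (by norm_num) (t.addNat 3))
            < logits (Sum.inl (target t)) (Fin.cast (by norm_num) (t.addNat 3)) := by
  refine ⟨6, myP, myQ V F, myK V F, myW1 V F, myW2 app, myWe V F, ?_⟩
  intro f1 f2 f3 v toks Z M A H Tr logits target t y hy
  fin_cases t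
  · have key : ∀ y' : V ⊕ F, logits y' (Fin.cast (by norm_num) ((0 : Fin 3).addNat 3))
        = (if y' = Sum.inl (app f1 v) then 3 else 0)
          + ((if y' = toks 0 then 1 else 0) + (if y' = toks 3 then 1 else 0)) :=
      fun y' => logitsEq app toks y' _ 0 (by decide) v f1 rfl rfl
    have hy' : y ≠ Sum.inl (app f1 v) := hy
    have main : logits y (Fin.cast (by norm_num) ((0 : Fin 3).addNat 3))
        < logits (Sum.inl (app f1 v)) (Fin.cast (by norm_num) ((0 : Fin 3).addNat 3)) := by
      rw [key y, key (Sum.inl (app f1 v)), if_neg hy', if_pos rfl]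
      split_ifs <;> norm_num
    exact main
  · have key : ∀ y' : V ⊕ F, logits y' (Fin.cast (by norm_num) ((1 : Fin 3).addNat 3))
        = (if y' = Sum.inl (app f2 (app f1 v)) then 3 else 0)
          + ((if y' = toks 1 then 1 else 0) + (if y' = toks 4 then 1 else 0)) :=
      fun y' => logitsEq app toks y' _ 1 (by decide) (app f1 v) f2 rfl rfl
    have hy' : y ≠ Sum.inl (app f2 (app f1 v)) := hy
    have main : logits y (Fin.cast (by norm_num) ((1 : Fin 3).addNat 3))
        < logits (Sum.inl (app f2 (app f1 v))) (Fin.cast (by norm_num) ((1 : Fin 3).addNat 3)) := by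
      rw [key y, key (Sum.inl (app f2 (app f1 v))), if_neg hy', if_pos rfl]
      split_ifs <;> norm_num
    exact main
  · have key : ∀ y' : V ⊕ F, logits y' (Fin.cast (by norm_num) ((2 : Fin 3).addNat 3))
        = (if y' = Sum.inl (app f3 (app f2 (app f1 v))) then 3 else 0)
          + ((if y' = toks 2 then 1 else 0) + (if y' = toks 5 then 1 else 0)) :=
      fun y' => logitsEq app toks y' _ 2 (by decide) (app f2 (app f1 v)) f3 rfl rfl
    have hy' : y ≠ Sum.inl (app f3 (app f2 (app f1 v))) := hy
    have main : logits y (Fin.cast (by norm_num) ((2 : Fin 3).addNat 3))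
        < logits (Sum.inl (app f3 (app f2 (app f1 v)))) (Fin.cast (by norm_num) ((2 : Fin 3).addNat 3)) := by
      rw [key y, key (Sum.inl (app f3 (app f2 (app f1 v)))), if_neg hy', if_pos rfl]
      split_ifs <;> norm_num
    exact main
end
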